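/- Let 0<γ≤1 and let h ∈ L¹(ℝⁿ) be supported in a cube Q centered at c with side length ℓ(Q) and satisfy ∫_{ℝⁿ} h = 0. Then there is a constant C>0, depending only on n and γ, such that for every x ∉ 2√n·Q (the cube concentric with Q of side length 2√n·ℓ(Q)), S_γ(h)(x) ≤ C · (ℓ(Q)^γ / |x−c|^{n+γ}) · ∫_Q |h(z)| dz. -/

import Mathlib

open MeasureTheory Metric Set
open scoped ENNReal NNReal Real

noncomputable section

/-- Euclidean space `ℝⁿ`. -/
abbrev En (n : ℕ) := EuclideanSpace ℝ (Fin n)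

/-- The weighted measure `w(s) = ∫_s w` of a set. -/
def wMeas {n : ℕ} (w : En n → ℝ) (s : Set (En n)) : ℝ≥0∞ :=
  ∫⁻ x in s, ENNReal.ofReal (w x)

/-- A weight: a positive locally integrable function. -/
def IsWeight {n : ℕ} (w : En n → ℝ) : Prop :=
  LocallyIntegrable w volume ∧ ∀ x, 0 < w x

/-- Average of a weight over a ball (lower-integral version). -/
def ballAvg {n : ℕ} (w : En n → ℝ) (y : En n) (r : ℝ) : ℝ≥0∞ :=
  wMeas w (ball y r) / volume (ball y r)

/-- The Muckenhoupt class `A_p`, `1 < p < ∞`. -/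
def IsAp {n : ℕ} (w : En n → ℝ) (p : ℝ) : Prop :=
  IsWeight w ∧ ∃ C : ℝ, 0 < C ∧ ∀ (y : En n) (r : ℝ), 0 < r →
    (ballAvg w y r) ^ (1 / p) *
      (ballAvg (fun x => w x ^ (-(1 / (p - 1)))) y r) ^ (1 - 1 / p) ≤ ENNReal.ofReal C

/-- The Muckenhoupt class `A₁`. -/
def IsA1 {n : ℕ} (w : En n → ℝ) : Prop :=
  IsWeight w ∧ ∃ C : ℝ, 0 < C ∧ ∀ (y : En n) (r : ℝ), 0 < r →
    ballAvg w y r ≤ ENNReal.ofReal C *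
      ENNReal.ofReal (essInf w (volume.restrict (ball y r)))

/-- `A_∞ = ⋃_{1 ≤ p < ∞} A_p`. -/
def IsAinfty {n : ℕ} (w : En n → ℝ) : Prop :=
  IsA1 w ∨ ∃ p : ℝ, 1 < p ∧ IsAp w p

/-- The doubling class `Δ₂`: `μ(2B) ≤ C μ(B)` for all balls. -/
def IsDoubling {n : ℕ} (μ : En n → ℝ) : Prop :=
  IsWeight μ ∧ ∃ C : ℝ, 0 < C ∧ ∀ (y : En n) (r : ℝ), 0 < r →
    wMeas μ (ball y (2 * r)) ≤ ENNReal.ofReal C * wMeas μ (ball y r)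

/-- The family `C_γ` of kernels: supported in the unit ball, mean zero,
`γ`-Hölder with constant 1. -/
def Cfam (n : ℕ) (γ : ℝ) : Set (En n → ℝ) :=
  {φ | Function.support φ ⊆ closedBall 0 1 ∧ (∫ x, φ x) = 0 ∧
    ∀ x x' : En n, |φ x - φ x'| ≤ ‖x - x'‖ ^ γ}

/-- `L¹` dilation `φ_t(y) = t^{-n} φ(y/t)`. -/
def dil {n : ℕ} (φ : En n → ℝ) (t : ℝ) (y : En n) : ℝ :=
  t ^ (-(n : ℝ)) * φ (t⁻¹ • y)

/-- `A_γ(f)(y,t) = sup_{φ ∈ C_γ} |φ_t * f(y)|`. -/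
def Agamma {n : ℕ} (γ : ℝ) (f : En n → ℝ) (y : En n) (t : ℝ) : ℝ :=
  ⨆ φ ∈ Cfam n γ, |∫ z, dil φ t (y - z) * f z|

/-- Square integral of `F(y,t)` over the cone `Γ(x)`, against `dy dt / t^{n+1}`. -/
def coneInt {n : ℕ} (F : En n → ℝ → ℝ) (x : En n) : ℝ≥0∞ :=
  (∫⁻ p : En n × ℝ,
    Set.indicator {q : En n × ℝ | dist x q.1 < q.2}
      (fun q => ENNReal.ofReal (F q.1 q.2) ^ 2 / ENNReal.ofReal (q.2 ^ ((n : ℝ) + 1))) p)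
    ^ (1 / 2 : ℝ)

/-- The intrinsic square function `S_γ(f)`. -/
def Sgamma {n : ℕ} (γ : ℝ) (f : En n → ℝ) (x : En n) : ℝ≥0∞ :=
  coneInt (Agamma γ f) x

/-- `(Σ_j |S_γ(f_j)(x)|²)^{1/2}`. -/
def Sl2 {n : ℕ} (γ : ℝ) (f : ℕ → En n → ℝ) (x : En n) : ℝ≥0∞ :=
  (∑' j, Sgamma γ (f j) x ^ 2) ^ (1 / 2 : ℝ)

/-- `‖f⃗(x)‖_{ℓ²} = (Σ_j |f_j(x)|²)^{1/2}`. -/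
def l2 {n : ℕ} (f : ℕ → En n → ℝ) (x : En n) : ℝ≥0∞ :=
  (∑' j, ENNReal.ofReal |f j x| ^ 2) ^ (1 / 2 : ℝ)

/-- Weighted `L^p` norm of an `ℝ≥0∞`-valued function (`p` finite). -/
def wLp {n : ℕ} (w : En n → ℝ) (p : ℝ) (g : En n → ℝ≥0∞) : ℝ≥0∞ :=
  (∫⁻ x, g x ^ p * ENNReal.ofReal (w x)) ^ (1 / p)

/-- Weighted `L^p` norm restricted to a set. -/
def wLpOn {n : ℕ} (w : En n → ℝ) (p : ℝ) (s : Set (En n)) (g : En n → ℝ≥0∞) : ℝ≥0∞ :=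
  (∫⁻ x in s, g x ^ p * ENNReal.ofReal (w x)) ^ (1 / p)

/-- Weighted weak `L^p` quasi-norm. -/
def wWeakLp {n : ℕ} (w : En n → ℝ) (p : ℝ) (g : En n → ℝ≥0∞) : ℝ≥0∞ :=
  ⨆ (lam : ℝ) (_ : 0 < lam),
    ENNReal.ofReal lam * wMeas w {x | ENNReal.ofReal lam < g x} ^ (1 / p)

/-- Weighted weak `L^p` quasi-norm restricted to a set. -/
def wWeakLpOn {n : ℕ} (w : En n → ℝ) (p : ℝ) (s : Set (En n)) (g : En n → ℝ≥0∞) : ℝ≥0∞ :=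
  ⨆ (lam : ℝ) (_ : 0 < lam),
    ENNReal.ofReal lam * wMeas w {x | x ∈ s ∧ ENNReal.ofReal lam < g x} ^ (1 / p)

/-- `L^q` norm (with exponent `q ∈ (0,∞]`, usual modification at `∞`) of an
`ℝ≥0∞`-valued function with respect to a measure. -/
def lqNorm {n : ℕ} (ν : Measure (En n)) (q : ℝ≥0∞) (F : En n → ℝ≥0∞) : ℝ≥0∞ :=
  if q = ∞ then essSup F ν else (∫⁻ y, F y ^ q.toReal ∂ν) ^ (1 / q.toReal)

/-- The measure `μ(y) dy`. -/
def muDens {n : ℕ} (μ : En n → ℝ) : Measure (En n) :=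
  volume.withDensity fun y => ENNReal.ofReal (μ y)

/-- The weighted amalgam norm `‖·‖_{(L^p,L^q)^α(w;μ)}`. -/
def amalgamNorm {n : ℕ} (w μ : En n → ℝ) (p α : ℝ) (q : ℝ≥0∞) (g : En n → ℝ≥0∞) : ℝ≥0∞ :=
  ⨆ (r : ℝ) (_ : 0 < r),
    lqNorm (muDens μ) q fun y =>
      wMeas w (ball y r) ^ (1 / α - 1 / p - (q⁻¹).toReal) * wLpOn w p (ball y r) g

/-- The weighted weak amalgam norm `‖·‖_{(WL^p,L^q)^α(w;μ)}`. -/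
def amalgamWeakNorm {n : ℕ} (w μ : En n → ℝ) (p α : ℝ) (q : ℝ≥0∞) (g : En n → ℝ≥0∞) : ℝ≥0∞ :=
  ⨆ (r : ℝ) (_ : 0 < r),
    lqNorm (muDens μ) q fun y =>
      wMeas w (ball y r) ^ (1 / α - 1 / p - (q⁻¹).toReal) * wWeakLpOn w p (ball y r) g

/-- `sup_{φ ∈ C_γ} |∫ [b(x) - b(z)] φ_t(y-z) f(z) dz|`. -/
def AgammaComm {n : ℕ} (γ : ℝ) (b f : En n → ℝ) (x y : En n) (t : ℝ) : ℝ :=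
  ⨆ φ ∈ Cfam n γ, |∫ z, (b x - b z) * dil φ t (y - z) * f z|

/-- The commutator `[b, S_γ](f)`. -/
def commS {n : ℕ} (γ : ℝ) (b f : En n → ℝ) (x : En n) : ℝ≥0∞ :=
  coneInt (AgammaComm γ b f x) x

/-- `(Σ_j |[b,S_γ](f_j)(x)|²)^{1/2}`. -/
def commSl2 {n : ℕ} (γ : ℝ) (b : En n → ℝ) (f : ℕ → En n → ℝ) (x : En n) : ℝ≥0∞ :=
  (∑' j, commS γ b (f j) x ^ 2) ^ (1 / 2 : ℝ)

/-- Average of `b` over the ball `B(y,r)`. -/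
def ballAvgF {n : ℕ} (b : En n → ℝ) (y : En n) (r : ℝ) : ℝ :=
  ⨍ x in ball y r, b x

/-- `b ∈ BMO(ℝⁿ)` with `‖b‖_* ≤ M` (over balls). -/
def IsBMOwith {n : ℕ} (b : En n → ℝ) (M : ℝ) : Prop :=
  LocallyIntegrable b volume ∧
  ∀ (y : En n) (r : ℝ), 0 < r →
    (⨍ x in ball y r, |b x - ballAvgF b y r|) ≤ M

/-- The Young function `Φ(t) = t(1 + log⁺ t)` on `ℝ≥0∞`. -/
def PhiE (t : ℝ≥0∞) : ℝ≥0∞ :=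
  t * (1 + ENNReal.ofReal (max (Real.log t.toReal) 0))

/-- Weighted Luxemburg norm `‖g‖_{L log L(w), s}`. -/
def luxLlogL {n : ℕ} (w : En n → ℝ) (s : Set (En n)) (g : En n → ℝ≥0∞) : ℝ≥0∞ :=
  sInf {c : ℝ≥0∞ | 0 < c ∧ c ≠ ∞ ∧
    (∫⁻ x in s, PhiE (g x / c) * ENNReal.ofReal (w x)) ≤ wMeas w s}

/-- The weighted amalgam norm of `L log L` type, `‖·‖_{(L log L, L^q)^α(w;μ)}`. -/
def amalgamLlogL {n : ℕ} (w μ : En n → ℝ) (α : ℝ) (q : ℝ≥0∞) (g : En n → ℝ≥0∞) : ℝ≥0∞ :=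
  ⨆ (r : ℝ) (_ : 0 < r),
    lqNorm (muDens μ) q fun y =>
      wMeas w (ball y r) ^ (1 / α - (q⁻¹).toReal) * luxLlogL w (ball y r) g

/-- The centered Hardy–Littlewood maximal function. -/
def HLmax {n : ℕ} (w : En n → ℝ) (x : En n) : ℝ≥0∞ :=
  ⨆ (r : ℝ) (_ : 0 < r), ballAvg (fun z => |w z|) x r

/-- Axis-parallel cube with center `c` and side length `L`. -/
def cube {n : ℕ} (c : En n) (L : ℝ) : Set (En n) := {x | ∀ i, |x i - c i| ≤ L / 2}

/-- Average of `b` over the cube of center `c` and side `L`. -/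
def cubeAvgF {n : ℕ} (b : En n → ℝ) (c : En n) (L : ℝ) : ℝ :=
  ⨍ x in cube c L, b x

/-- `b ∈ BMO(ℝⁿ)` with `‖b‖_* ≤ M` (over cubes). -/
def IsBMOcubeWith {n : ℕ} (b : En n → ℝ) (M : ℝ) : Prop :=
  LocallyIntegrable b volume ∧
  ∀ (c : En n) (L : ℝ), 0 < L →
    (⨍ x in cube c L, |b x - cubeAvgF b c L|) ≤ M

/-- Weighted Luxemburg norm `‖g‖_{exp L(w), s}` for the Young function `e^t - 1`. -/
def luxExpL {n : ℕ} (w : En n → ℝ) (s : Set (En n)) (g : En n → ℝ) : ℝ≥0∞ :=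
  sInf ((fun σ : ℝ => ENNReal.ofReal σ) ''
    {σ : ℝ | 0 < σ ∧
      (∫⁻ x in s, ENNReal.ofReal (Real.exp (|g x| / σ) - 1) * ENNReal.ofReal (w x))
        ≤ wMeas w s})

/-- `sup_{φ ∈ C_γ} |φ_t * g(y)|` for a complex-valued `g`. -/
def AgammaC {n : ℕ} (γ : ℝ) (g : En n → ℂ) (y : En n) (t : ℝ) : ℝ :=
  ⨆ φ ∈ Cfam n γ, ‖∫ z, (dil φ t (y - z) : ℂ) * g z‖

/-- The intrinsic square function of a complex-valued function. -/
def SgammaC {n : ℕ} (γ : ℝ) (g : En n → ℂ) (x : En n) : ℝ≥0∞ :=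
  coneInt (AgammaC γ g) x


-- ============ helper lemmas ============

lemma cfam_continuous {n : ℕ} {γ : ℝ} (hγ0 : 0 < γ) {φ : En n → ℝ}
    (hφ : ∀ a b : En n, |φ a - φ b| ≤ ‖a - b‖ ^ γ) : Continuous φ := by
  have : HolderWith 1 ⟨γ, hγ0.le⟩ φ := by
    intro a b
    rw [edist_dist, Real.dist_eq, edist_dist]
    rw [show ((1 : ℝ≥0) : ℝ≥0∞) = 1 from rfl, one_mul]
    have h1 : ENNReal.ofReal (dist a b) ^ (γ : ℝ) = ENNReal.ofReal (dist a b ^ γ) := by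
      rw [ENNReal.ofReal_rpow_of_nonneg dist_nonneg hγ0.le]
    calc ENNReal.ofReal |φ a - φ b| ≤ ENNReal.ofReal (‖a - b‖ ^ γ) :=
          ENNReal.ofReal_le_ofReal (hφ a b)
      _ = ENNReal.ofReal (dist a b) ^ (γ : ℝ) := by rw [h1, dist_eq_norm]
  exact this.continuous hγ0

lemma cube_norm_le {n : ℕ} {c : En n} {L : ℝ} (hL : 0 ≤ L) {z : En n}
    (hz : z ∈ cube c L) : ‖z - c‖ ≤ Real.sqrt n * L / 2 := by
  have h1 : ‖z - c‖ = Real.sqrt (∑ i, ‖(z - c) i‖ ^ 2) := EuclideanSpace.norm_eq _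
  rw [h1]
  have h2 : (∑ i, ‖(z - c) i‖ ^ 2) ≤ (n : ℝ) * (L / 2) ^ 2 := by
    calc (∑ i, ‖(z - c) i‖ ^ 2) ≤ ∑ _i : Fin n, (L / 2) ^ 2 := by
          apply Finset.sum_le_sum
          intro i _
          have : |z i - c i| ≤ L / 2 := hz i
          have h3 : ‖(z - c) i‖ = |z i - c i| := by simp [Real.norm_eq_abs]
          rw [h3]
          exact pow_le_pow_left₀ (abs_nonneg _) this 2
      _ = (n : ℝ) * (L / 2) ^ 2 := by simp [Finset.sum_const, mul_comm]
  calc Real.sqrt (∑ i, ‖(z - c) i‖ ^ 2) ≤ Real.sqrt ((n : ℝ) * (L / 2) ^ 2) :=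
        Real.sqrt_le_sqrt h2
    _ = Real.sqrt n * (L / 2) := by
        rw [Real.sqrt_mul (Nat.cast_nonneg n), Real.sqrt_sq (by linarith)]
    _ = Real.sqrt n * L / 2 := by ring

lemma norm_ge_of_notin_cube {n : ℕ} {c : En n} {L' : ℝ} {x : En n}
    (hx : x ∉ cube c L') : L' / 2 < ‖x - c‖ := by
  rw [cube, mem_setOf_eq] at hx
  push_neg at hx
  obtain ⟨i, hi⟩ := hx
  calc L' / 2 < |x i - c i| := hi
    _ = Real.sqrt (‖(x - c) i‖ ^ 2) := by
        rw [Real.sqrt_sq (norm_nonneg _)]; simp [Real.norm_eq_abs]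
    _ ≤ Real.sqrt (∑ j, ‖(x - c) j‖ ^ 2) := by
        apply Real.sqrt_le_sqrt
        exact Finset.single_le_sum (f := fun j => ‖(x - c) j‖ ^ 2)
          (fun j _ => sq_nonneg _) (Finset.mem_univ i)
    _ = ‖x - c‖ := (EuclideanSpace.norm_eq _).symm

lemma agamma_le {n : ℕ} {γ : ℝ} (hγ0 : 0 < γ) {h : En n → ℝ} {c : En n} {L : ℝ}
    (hL : 0 < L) (hint : Integrable h volume) (hsupp : Function.support h ⊆ cube c L)
    (hmean : (∫ z, h z) = 0) (y : En n) {t : ℝ} (ht : 0 < t) :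
    Agamma γ h y t ≤ (Real.sqrt n * L / 2) ^ γ * t ^ (-((n : ℝ) + γ)) * ∫ z, |h z| := by
  set K : ℝ := (Real.sqrt n * L / 2) ^ γ * t ^ (-((n : ℝ) + γ)) with hK
  have hsn : (0 : ℝ) ≤ Real.sqrt n * L / 2 := by positivity
  have hK0 : 0 ≤ K := by
    apply mul_nonneg (Real.rpow_nonneg hsn _) (Real.rpow_nonneg ht.le _)
  have hA0 : 0 ≤ ∫ z, |h z| := integral_nonneg fun z => abs_nonneg _
  have hM0 : 0 ≤ K * ∫ z, |h z| := mul_nonneg hK0 hA0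
  apply Real.iSup_le _ hM0
  intro φ
  apply Real.iSup_le _ hM0
  intro hφ
  obtain ⟨hφsupp, hφmean, hφhold⟩ := hφ
  have hφcont : Continuous φ := cfam_continuous hγ0 hφhold
  -- the pointwise kernel bound
  have hker : ∀ z : En n, |(dil φ t (y - z) - dil φ t (y - c)) * h z| ≤ K * |h z| := by
    intro z
    by_cases hz : h z = 0
    · simp [hz, mul_nonneg hK0]
    · have hzQ : z ∈ cube c L := hsupp (Function.mem_support.2 hz)
      have hnz : ‖z - c‖ ≤ Real.sqrt n * L / 2 := cube_norm_le hL.le hzQ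
      have h1 : |dil φ t (y - z) - dil φ t (y - c)|
          ≤ t ^ (-(n : ℝ)) * (t⁻¹ * ‖z - c‖) ^ γ := by
        rw [dil, dil, ← mul_sub, abs_mul, abs_of_nonneg (Real.rpow_nonneg ht.le _)]
        apply mul_le_mul_of_nonneg_left _ (Real.rpow_nonneg ht.le _)
        calc |φ (t⁻¹ • (y - z)) - φ (t⁻¹ • (y - c))|
            ≤ ‖t⁻¹ • (y - z) - t⁻¹ • (y - c)‖ ^ γ := hφhold _ _
          _ = (t⁻¹ * ‖z - c‖) ^ γ := by
              rw [← smul_sub, norm_smul, Real.norm_eq_abs,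
                abs_of_nonneg (inv_nonneg.2 ht.le),
                show y - z - (y - c) = c - z by abel, norm_sub_rev]
      have h2 : t ^ (-(n : ℝ)) * (t⁻¹ * ‖z - c‖) ^ γ ≤ K := by
        rw [hK]
        have h3 : (t⁻¹ * ‖z - c‖) ^ γ ≤ t ^ (-γ) * (Real.sqrt n * L / 2) ^ γ := by
          rw [Real.mul_rpow (inv_nonneg.2 ht.le) (norm_nonneg _)]
          rw [Real.inv_rpow ht.le, ← Real.rpow_neg ht.le]
          apply mul_le_mul_of_nonneg_left _ (Real.rpow_nonneg ht.le _)
          exact Real.rpow_le_rpow (norm_nonneg _) hnz hγ0.le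
        calc t ^ (-(n : ℝ)) * (t⁻¹ * ‖z - c‖) ^ γ
            ≤ t ^ (-(n : ℝ)) * (t ^ (-γ) * (Real.sqrt n * L / 2) ^ γ) :=
              mul_le_mul_of_nonneg_left h3 (Real.rpow_nonneg ht.le _)
          _ = (Real.sqrt n * L / 2) ^ γ * t ^ (-((n : ℝ) + γ)) := by
              rw [show -((n : ℝ) + γ) = -(n : ℝ) + -γ by ring, Real.rpow_add ht]
              ring
      calc |(dil φ t (y - z) - dil φ t (y - c)) * h z|
          = |dil φ t (y - z) - dil φ t (y - c)| * |h z| := abs_mul _ _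
        _ ≤ K * |h z| := by
            apply mul_le_mul_of_nonneg_right _ (abs_nonneg _)
            exact le_trans h1 h2
  -- integrability
  have hdom : Integrable (fun z => K * |h z|) volume := hint.abs.const_mul K
  have hcont : Continuous fun z : En n => dil φ t (y - z) - dil φ t (y - c) := by
    apply Continuous.sub _ continuous_const
    unfold dil
    exact continuous_const.mul (hφcont.comp (by fun_prop :
      Continuous fun z : En n => t⁻¹ • (y - z)))
  have hg : Integrable (fun z => (dil φ t (y - z) - dil φ t (y - c)) * h z) volume := by
    apply Integrable.mono' hdom
      (hcont.aestronglyMeasurable.mul hint.aestronglyMeasurable)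
    filter_upwards with z
    rw [Real.norm_eq_abs]
    exact hker z
  have hconst : Integrable (fun z => dil φ t (y - c) * h z) volume := hint.const_mul _
  have hsplit : (∫ z, dil φ t (y - z) * h z)
      = ∫ z, (dil φ t (y - z) - dil φ t (y - c)) * h z := by
    have : (fun z => dil φ t (y - z) * h z)
        = fun z => (dil φ t (y - z) - dil φ t (y - c)) * h z + dil φ t (y - c) * h z := by
      funext z; ring
    rw [this, integral_add hg hconst, integral_const_mul, hmean, mul_zero, add_zero]
  rw [hsplit]
  calc |∫ z, (dil φ t (y - z) - dil φ t (y - c)) * h z|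
      ≤ ∫ z, K * |h z| := by
        rw [← Real.norm_eq_abs]
        apply norm_integral_le_of_norm_le hdom
        filter_upwards with z
        rw [Real.norm_eq_abs]
        exact hker z
    _ = K * ∫ z, |h z| := integral_const_mul _ _

lemma agamma_vanish {n : ℕ} {γ : ℝ} {h : En n → ℝ} {c : En n} {L : ℝ}
    (hL : 0 < L) (hsupp : Function.support h ⊆ cube c L)
    {x : En n} (hd : Real.sqrt n * L < ‖x - c‖)
    {y : En n} {t : ℝ} (hyt : dist x y < t) (ht4 : t ≤ ‖x - c‖ / 4) :
    Agamma γ h y t ≤ 0 := by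
  apply Real.iSup_le _ le_rfl
  intro φ
  apply Real.iSup_le _ le_rfl
  intro hφ
  have hzero : ∀ z : En n, dil φ t (y - z) * h z = 0 := by
    intro z
    by_cases hz : h z = 0
    · rw [hz, mul_zero]
    · have hzQ : z ∈ cube c L := hsupp (Function.mem_support.2 hz)
      have hnz : ‖z - c‖ ≤ Real.sqrt n * L / 2 := cube_norm_le hL.le hzQ
      have ht0 : 0 < t := lt_of_le_of_lt dist_nonneg hyt
      set d := ‖x - c‖ with hdd
      have hd0 : 0 < d := lt_of_le_of_lt (by positivity) hd
      have htri : d ≤ ‖x - y‖ + ‖y - z‖ + ‖z - c‖ := by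
        calc d = ‖(x - y) + (y - z) + (z - c)‖ := by rw [hdd]; congr 1; abel
          _ ≤ ‖x - y‖ + ‖y - z‖ + ‖z - c‖ := by
              refine le_trans (norm_add_le _ _) ?_
              exact add_le_add (norm_add_le _ _) le_rfl
      have hxy : ‖x - y‖ < t := by rwa [← dist_eq_norm]
      have hzc : ‖z - c‖ < d / 2 := lt_of_le_of_lt hnz (by linarith)
      have hyz : t < ‖y - z‖ := by linarith
      have : φ (t⁻¹ • (y - z)) = 0 := by
        by_contra hne
        have hmem : t⁻¹ • (y - z) ∈ closedBall (0 : En n) 1 :=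
          hφ.1 (Function.mem_support.2 hne)
        rw [mem_closedBall, dist_zero_right, norm_smul] at hmem
        have : ‖t⁻¹‖ * ‖y - z‖ = t⁻¹ * ‖y - z‖ := by
          rw [Real.norm_eq_abs, abs_of_nonneg (inv_nonneg.2 ht0.le)]
        rw [this] at hmem
        have h2 : ‖y - z‖ ≤ t := by
          have h3 := mul_le_mul_of_nonneg_left hmem ht0.le
          rw [mul_one, ← mul_assoc, mul_inv_cancel₀ ht0.ne', one_mul] at h3
          exact h3
        linarith
      rw [dil, this, mul_zero, zero_mul]
  have : (∫ z, dil φ t (y - z) * h z) = 0 := by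
    simp only [hzero, integral_zero]
  rw [this, abs_zero]

/-- decay of `S_γ(h)` away from the supporting cube of a
mean-zero `h`. -/
theorem intrinsic_square_decay_of_atom (n : ℕ) (γ : ℝ)
    (hγ0 : 0 < γ) (hγ1 : γ ≤ 1) :
    ∃ C : ℝ, 0 < C ∧ ∀ (h : En n → ℝ) (c : En n) (L : ℝ), 0 < L →
      Integrable h volume → Function.support h ⊆ cube c L → (∫ z, h z) = 0 →
      ∀ x : En n, x ∉ cube c (2 * Real.sqrt n * L) →
        Sgamma γ h x ≤
          ENNReal.ofReal (C * (L ^ γ / ‖x - c‖ ^ ((n : ℝ) + γ)) *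
            ∫ z in cube c L, |h z|) := by
  classical
  rcases Nat.eq_zero_or_pos n with hn | hn
  · subst hn
    exact ⟨1, one_pos, fun h c L hL hint hsupp hmean x hx =>
      absurd (fun i => Fin.elim0 i) hx⟩
  have hsn0 : 0 < Real.sqrt n := Real.sqrt_pos.2 (by exact_mod_cast hn)
  haveI : Nonempty (Fin n) := Fin.pos_iff_nonempty.mp hn
  set v : ℝ≥0∞ := volume (ball (0 : En n) 1) with hv
  have hvlt : v < ∞ := measure_ball_lt_top
  set c₀ : ℝ := (Real.sqrt n / 2) ^ γ * 4 ^ ((n : ℝ) + γ) *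
    Real.sqrt (v.toReal / (2 * (n : ℝ) + 2 * γ)) with hc₀
  have hc₀0 : 0 ≤ c₀ := by positivity
  refine ⟨c₀ + 1, by positivity, fun h c L hL hint hsupp hmean x hx => ?_⟩
  set d := ‖x - c‖ with hdd
  have hd : Real.sqrt n * L < d := by
    have h2 := norm_ge_of_notin_cube hx
    rw [← hdd] at h2
    linarith
  have hd0 : 0 < d := lt_trans (mul_pos hsn0 hL) hd
  have hAeq : (∫ z in cube c L, |h z|) = ∫ z, |h z| :=
    setIntegral_eq_integral_of_forall_compl_eq_zero fun z hz => by
      rw [abs_eq_zero]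
      exact Function.notMem_support.mp fun hs => hz (hsupp hs)
  rw [hAeq]
  set A := ∫ z, |h z| with hA
  have hA0 : 0 ≤ A := integral_nonneg fun z => abs_nonneg _
  set Kγ : ℝ := (Real.sqrt n * L / 2) ^ γ with hKγ
  have hKγ0 : 0 ≤ Kγ := Real.rpow_nonneg (by positivity) _
  set r : ℝ := -(2 * (n : ℝ) + 2 * γ + 1) with hr
  set S : Set (En n × ℝ) := {q | dist x q.1 < q.2 ∧ d / 4 < q.2} with hS
  set val : ℝ → ℝ≥0∞ := fun t => ENNReal.ofReal (Kγ * t ^ (-((n : ℝ) + γ)) * A) ^ 2 /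
    ENNReal.ofReal (t ^ ((n : ℝ) + 1)) with hval
  -- pointwise domination
  have hmono : ∀ p : En n × ℝ, Set.indicator {q : En n × ℝ | dist x q.1 < q.2}
      (fun q => ENNReal.ofReal (Agamma γ h q.1 q.2) ^ 2 /
        ENNReal.ofReal (q.2 ^ ((n : ℝ) + 1))) p
      ≤ S.indicator (fun q => val q.2) p := by
    intro p
    rw [Set.indicator_apply, Set.indicator_apply]
    by_cases h1 : p ∈ {q : En n × ℝ | dist x q.1 < q.2}
    · rw [if_pos h1]
      have hp1 : dist x p.1 < p.2 := h1
      have ht0 : 0 < p.2 := lt_of_le_of_lt dist_nonneg hp1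
      by_cases h2 : d / 4 < p.2
      · rw [if_pos (show p ∈ S from ⟨hp1, h2⟩), hval]
        apply ENNReal.div_le_div_right
        apply pow_le_pow_left' (ENNReal.ofReal_le_ofReal _)
        exact agamma_le hγ0 hL hint hsupp hmean p.1 ht0
      · rw [if_neg (show p ∉ S from fun hp => h2 hp.2)]
        have hv0 : Agamma γ h p.1 p.2 ≤ 0 :=
          agamma_vanish hL hsupp hd hp1 (le_of_not_gt h2)
        rw [ENNReal.ofReal_of_nonpos hv0]
        simp
    · rw [if_neg h1]
      exact zero_le
  -- measurability
  have hSmeas : MeasurableSet S := by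
    rw [hS, show {q : En n × ℝ | dist x q.1 < q.2 ∧ d / 4 < q.2}
      = {q : En n × ℝ | dist x q.1 < q.2} ∩ {q : En n × ℝ | d / 4 < q.2} from rfl]
    exact ((isOpen_lt (continuous_const.dist continuous_fst) continuous_snd).measurableSet).inter
      ((isOpen_lt continuous_const continuous_snd).measurableSet)
  have hvalmeas : Measurable fun q : En n × ℝ => val q.2 := by
    rw [hval]
    apply Measurable.div
    · exact (((measurable_snd.pow measurable_const).const_mul Kγ).mul_const
        A).ennreal_ofReal.pow_const 2
    · exact (measurable_snd.pow measurable_const).ennreal_ofReal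
  -- Tonelli
  have htonelli : (∫⁻ p : En n × ℝ, S.indicator (fun q => val q.2) p)
      = ∫⁻ t : ℝ, ∫⁻ y : En n, S.indicator (fun q => val q.2) (y, t) := by
    rw [Measure.volume_eq_prod]
    exact lintegral_prod_symm _ (hvalmeas.indicator hSmeas).aemeasurable
  -- inner integral
  have hinner : ∀ t : ℝ, (∫⁻ y : En n, S.indicator (fun q => val q.2) (y, t))
      = (Ioi (d / 4)).indicator (fun t => val t * volume (ball x t)) t := by
    intro t
    by_cases hdt : d / 4 < t
    · have heq : ∀ y : En n, S.indicator (fun q => val q.2) (y, t)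
          = (ball x t).indicator (fun _ => val t) y := by
        intro y
        rw [Set.indicator_apply, Set.indicator_apply]
        have : (y, t) ∈ S ↔ y ∈ ball x t := by
          rw [hS]
          simp only [mem_setOf_eq, mem_ball, hdt, and_true]
          rw [dist_comm]
        by_cases hy : y ∈ ball x t
        · rw [if_pos (this.mpr hy), if_pos hy]
        · rw [if_neg (fun hmem => hy (this.mp hmem)), if_neg hy]
      simp only [heq]
      rw [lintegral_indicator measurableSet_ball, setLIntegral_const,
        Set.indicator_of_mem (mem_Ioi.mpr hdt)]
    · have heq : ∀ y : En n, S.indicator (fun q => val q.2) (y, t) = 0 := by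
        intro y
        apply Set.indicator_of_notMem
        rw [hS, mem_setOf_eq]
        tauto
      simp only [heq, lintegral_zero]
      rw [Set.indicator_of_notMem (by rwa [mem_Ioi])]
  -- value on the ray
  have hball : ∀ t ∈ Ioi (d / 4), val t * volume (ball x t)
      = ENNReal.ofReal (Kγ ^ 2 * A ^ 2) * (ENNReal.ofReal (t ^ r) * v) := by
    intro t ht
    have ht0 : 0 < t := lt_trans (by positivity) (mem_Ioi.mp ht)
    have hb : volume (ball x t) = ENNReal.ofReal (t ^ n) * v := by
      rw [hv, Measure.addHaar_ball volume x ht0.le, finrank_euclideanSpace_fin]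
    rw [hb]
    calc val t * (ENNReal.ofReal (t ^ n) * v)
        = ENNReal.ofReal ((Kγ * t ^ (-((n : ℝ) + γ)) * A) ^ 2 / t ^ ((n : ℝ) + 1) * t ^ n)
            * v := by
          simp only [hval]
          rw [← ENNReal.ofReal_pow (by positivity),
            ← ENNReal.ofReal_div_of_pos (Real.rpow_pos_of_pos ht0 _),
            ← mul_assoc, ← ENNReal.ofReal_mul (by positivity)]
      _ = ENNReal.ofReal (Kγ ^ 2 * A ^ 2 * t ^ r) * v := by
          congr 2
          rw [← Real.rpow_natCast t n]
          calc (Kγ * t ^ (-((n : ℝ) + γ)) * A) ^ 2 / t ^ ((n : ℝ) + 1) * t ^ ((n : ℕ) : ℝ)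
              = Kγ ^ 2 * A ^ 2 * (t ^ (-((n : ℝ) + γ)) * t ^ (-((n : ℝ) + γ))
                  * t ^ ((n : ℕ) : ℝ) / t ^ ((n : ℝ) + 1)) := by ring
            _ = Kγ ^ 2 * A ^ 2 * t ^ r := by
                have hexp : -((n : ℝ) + γ) + -((n : ℝ) + γ) + ((n : ℕ) : ℝ) - ((n : ℝ) + 1)
                    = r := by rw [hr]; push_cast; ring
                rw [← Real.rpow_add ht0, ← Real.rpow_add ht0, ← Real.rpow_sub ht0, hexp]
      _ = ENNReal.ofReal (Kγ ^ 2 * A ^ 2) * (ENNReal.ofReal (t ^ r) * v) := by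
          rw [ENNReal.ofReal_mul (by positivity), mul_assoc]
  -- the ray integral
  have hioi : (∫⁻ t in Ioi (d / 4), ENNReal.ofReal (t ^ r))
      = ENNReal.ofReal ((d / 4) ^ (-(2 * (n : ℝ) + 2 * γ)) / (2 * (n : ℝ) + 2 * γ)) := by
    have hr1 : r < -1 := by
      rw [hr]
      have : (0 : ℝ) ≤ (n : ℝ) := Nat.cast_nonneg n
      linarith
    have hd4 : 0 < d / 4 := by linarith
    rw [← ofReal_integral_eq_lintegral_ofReal (integrableOn_Ioi_rpow_of_lt hr1 hd4)
      (ae_restrict_of_forall_mem measurableSet_Ioi fun t ht =>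
        Real.rpow_nonneg (le_of_lt (lt_trans hd4 (mem_Ioi.mp ht))) r)]
    rw [integral_Ioi_rpow_of_lt hr1 hd4]
    congr 1
    rw [hr, show -(2 * (n : ℝ) + 2 * γ + 1) + 1 = -(2 * (n : ℝ) + 2 * γ) by ring]
    rw [show -((d / 4) ^ (-(2 * (n : ℝ) + 2 * γ))) / -(2 * (n : ℝ) + 2 * γ)
      = (d / 4) ^ (-(2 * (n : ℝ) + 2 * γ)) / (2 * (n : ℝ) + 2 * γ) from
        neg_div_neg_eq _ _]
  -- the algebraic identity for the constant
  have key : Kγ ^ 2 * A ^ 2 * ((d / 4) ^ (-(2 * (n : ℝ) + 2 * γ)) / (2 * (n : ℝ) + 2 * γ)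
        * v.toReal)
      = (c₀ * (L ^ γ / d ^ ((n : ℝ) + γ)) * A) ^ 2 := by
    have hvR : 0 ≤ v.toReal := ENNReal.toReal_nonneg
    have hE : 0 < 2 * (n : ℝ) + 2 * γ := by positivity
    have e1 : Kγ = (Real.sqrt n / 2) ^ γ * L ^ γ := by
      rw [hKγ, show Real.sqrt n * L / 2 = Real.sqrt n / 2 * L by ring,
        Real.mul_rpow (by positivity) hL.le]
    have e0 : (d / 4 : ℝ) ^ (-((n : ℝ) + γ)) = 4 ^ ((n : ℝ) + γ) * (d ^ ((n : ℝ) + γ))⁻¹ := by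
      rw [Real.rpow_neg (by positivity), Real.div_rpow hd0.le (by norm_num), inv_div,
        div_eq_mul_inv]
    have e2 : (d / 4 : ℝ) ^ (-(2 * (n : ℝ) + 2 * γ))
        = (4 ^ ((n : ℝ) + γ) * (d ^ ((n : ℝ) + γ))⁻¹) ^ 2 := by
      have hexp2 : -((n : ℝ) + γ) * ((2 : ℕ) : ℝ) = -(2 * (n : ℝ) + 2 * γ) := by
        push_cast; ring
      rw [← e0, ← Real.rpow_natCast ((d / 4 : ℝ) ^ (-((n : ℝ) + γ))) 2,
        ← Real.rpow_mul (by positivity), hexp2]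
    have e3 : Real.sqrt (v.toReal / (2 * (n : ℝ) + 2 * γ)) ^ 2
        = v.toReal / (2 * (n : ℝ) + 2 * γ) := Real.sq_sqrt (by positivity)
    have e4 : L ^ γ / d ^ ((n : ℝ) + γ) = L ^ γ * (d ^ ((n : ℝ) + γ))⁻¹ := div_eq_mul_inv _ _
    rw [e1, e2, e4, hc₀]
    linear_combination (-(((Real.sqrt n / 2) ^ γ) ^ 2 * (4 ^ ((n : ℝ) + γ)) ^ 2 * (L ^ γ) ^ 2
      * ((d ^ ((n : ℝ) + γ)) ⁻¹) ^ 2 * A ^ 2)) * e3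
  -- assemble the lintegral bound
  have hIle : (∫⁻ p : En n × ℝ, Set.indicator {q : En n × ℝ | dist x q.1 < q.2}
      (fun q => ENNReal.ofReal (Agamma γ h q.1 q.2) ^ 2 /
        ENNReal.ofReal (q.2 ^ ((n : ℝ) + 1))) p)
      ≤ ENNReal.ofReal ((c₀ * (L ^ γ / d ^ ((n : ℝ) + γ)) * A) ^ 2) := by
    calc (∫⁻ p : En n × ℝ, Set.indicator {q : En n × ℝ | dist x q.1 < q.2}
        (fun q => ENNReal.ofReal (Agamma γ h q.1 q.2) ^ 2 /
          ENNReal.ofReal (q.2 ^ ((n : ℝ) + 1))) p)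
        ≤ ∫⁻ p : En n × ℝ, S.indicator (fun q => val q.2) p := lintegral_mono hmono
      _ = ∫⁻ t : ℝ, ∫⁻ y : En n, S.indicator (fun q => val q.2) (y, t) := htonelli
      _ = ∫⁻ t : ℝ, (Ioi (d / 4)).indicator (fun t => val t * volume (ball x t)) t := by
          simp only [hinner]
      _ = ∫⁻ t in Ioi (d / 4), val t * volume (ball x t) :=
          lintegral_indicator measurableSet_Ioi _
      _ = ∫⁻ t in Ioi (d / 4),
            ENNReal.ofReal (Kγ ^ 2 * A ^ 2) * (ENNReal.ofReal (t ^ r) * v) :=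
          setLIntegral_congr_fun measurableSet_Ioi
            hball
      _ = ENNReal.ofReal (Kγ ^ 2 * A ^ 2) *
            ((∫⁻ t in Ioi (d / 4), ENNReal.ofReal (t ^ r)) * v) := by
          rw [lintegral_const_mul' _ _ ENNReal.ofReal_ne_top,
            lintegral_mul_const _ ((measurable_id'.pow measurable_const).ennreal_ofReal)]
      _ = ENNReal.ofReal (Kγ ^ 2 * A ^ 2) *
            (ENNReal.ofReal ((d / 4) ^ (-(2 * (n : ℝ) + 2 * γ)) / (2 * (n : ℝ) + 2 * γ)) *
              ENNReal.ofReal v.toReal) := by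
          rw [hioi, ENNReal.ofReal_toReal hvlt.ne]
      _ = ENNReal.ofReal (Kγ ^ 2 * A ^ 2 *
            ((d / 4) ^ (-(2 * (n : ℝ) + 2 * γ)) / (2 * (n : ℝ) + 2 * γ) * v.toReal)) := by
          rw [← ENNReal.ofReal_mul (by positivity), ← ENNReal.ofReal_mul (by positivity)]
      _ = ENNReal.ofReal ((c₀ * (L ^ γ / d ^ ((n : ℝ) + γ)) * A) ^ 2) := by rw [key]
  -- conclude
  have hQ0 : 0 ≤ L ^ γ / d ^ ((n : ℝ) + γ) := by positivity
  calc Sgamma γ h x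
      ≤ ENNReal.ofReal ((c₀ * (L ^ γ / d ^ ((n : ℝ) + γ)) * A) ^ 2) ^ (1 / 2 : ℝ) := by
        unfold Sgamma coneInt
        exact ENNReal.rpow_le_rpow hIle (by norm_num)
    _ = ENNReal.ofReal (c₀ * (L ^ γ / d ^ ((n : ℝ) + γ)) * A) := by
        rw [ENNReal.ofReal_rpow_of_nonneg (by positivity) (by norm_num : (0:ℝ) ≤ 1 / 2)]
        congr 1
        rw [← Real.rpow_natCast (c₀ * (L ^ γ / d ^ ((n : ℝ) + γ)) * A) 2,
          ← Real.rpow_mul (by positivity)]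
        norm_num
    _ ≤ ENNReal.ofReal ((c₀ + 1) * (L ^ γ / d ^ ((n : ℝ) + γ)) * A) := by
        apply ENNReal.ofReal_le_ofReal
        apply mul_le_mul_of_nonneg_right _ hA0
        exact mul_le_mul_of_nonneg_right (by linarith) hQ0

end
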